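/- If a, n ≥ 2 and f : X → X is an (an, n)-expansive homeomorphism of a compact metric space, then f is (a,1)-expansive. -/

import Mathlib

variable {X : Type*} [MetricSpace X]

/-- The `k`-th iterate (`k ∈ ℤ`) of a homeomorphism, as a function. -/
noncomputable def hiter (f : X ≃ₜ X) (k : ℤ) : X → X := ⇑(f.toEquiv ^ k)

/-- A set is `δ`-separated if distinct points are at distance `> δ`. -/
def IsSeparated' (δ : ℝ) (B : Set X) : Prop :=
  ∀ x ∈ B, ∀ y ∈ B, x ≠ y → δ < dist x y

/-- The `δ`-cardinality of a set: sup of cardinalities of `δ`-separated subsets. -/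
noncomputable def dCard (δ : ℝ) (A : Set X) : ℕ∞ :=
  ⨆ B ∈ {B : Set X | B ⊆ A ∧ IsSeparated' δ B}, B.encard

/-- `(m,n)`-expansiveness with a given expansive constant `δ`. -/
def MNExpansiveWith (f : X ≃ₜ X) (m n : ℕ) (δ : ℝ) : Prop :=
  ∀ A : Set X, A.encard = m → ∃ k : ℤ, (n : ℕ∞) < dCard δ (hiter f k '' A)

/-- `(m,n)`-expansiveness. -/
def MNExpansive (f : X ≃ₜ X) (m n : ℕ) : Prop :=
  ∃ δ > 0, MNExpansiveWith f m n δ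

open Function Filter Topology

section Aux

lemma hiter_natCast (f : X ≃ₜ X) (g : ℕ) : hiter f (g : ℤ) = (⇑f)^[g] := by
  unfold hiter
  rw [zpow_natCast, Equiv.Perm.coe_pow, Homeomorph.coe_toEquiv]

lemma hiter_add (f : X ≃ₜ X) (k t : ℤ) (x : X) :
    hiter f (k + t) x = hiter f k (hiter f t x) := by
  unfold hiter
  rw [zpow_add]
  rfl

lemma hiter_zero (f : X ≃ₜ X) (x : X) : hiter f 0 x = x := by
  unfold hiter; simp

lemma hiter_injective (f : X ≃ₜ X) (k : ℤ) : Function.Injective (hiter f k) :=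
  (f.toEquiv ^ k).injective

/-- A "dynamical clique": all pairs stay within `ε` at all times. -/
def DynClique (f : X ≃ₜ X) (ε : ℝ) (C : Set X) : Prop :=
  ∀ x ∈ C, ∀ y ∈ C, ∀ k : ℤ, dist (hiter f k x) (hiter f k y) ≤ ε

lemma DynClique.mono {f : X ≃ₜ X} {ε ε' : ℝ} {C : Set X} (h : DynClique f ε C)
    (hε : ε ≤ ε') : DynClique f ε' C :=
  fun x hx y hy k => (h x hx y hy k).trans hε

lemma DynClique.image {f : X ≃ₜ X} {ε : ℝ} {C : Set X} (h : DynClique f ε C) (t : ℤ) :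
    DynClique f ε (hiter f t '' C) := by
  rintro _ ⟨x, hx, rfl⟩ _ ⟨y, hy, rfl⟩ k
  rw [← hiter_add, ← hiter_add]
  exact h x hx y hy _

lemma encard_le_dCard {δ : ℝ} {A B : Set X} (hBA : B ⊆ A) (hsep : IsSeparated' δ B) :
    B.encard ≤ dCard δ A := by
  exact le_iSup₂ (f := fun (B : Set X) (_ : B ∈ {B : Set X | B ⊆ A ∧ IsSeparated' δ B}) =>
    B.encard) B ⟨hBA, hsep⟩

lemma dCard_le {δ : ℝ} {A : Set X} {m : ℕ∞}
    (h : ∀ B ⊆ A, IsSeparated' δ B → B.encard ≤ m) : dCard δ A ≤ m :=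
  iSup₂_le fun B hB => h B hB.1 hB.2

lemma dist_le_of_dCard_le_one {δ : ℝ} (hδ : 0 < δ) {s : Set X} (h : dCard δ s ≤ 1)
    {x y : X} (hx : x ∈ s) (hy : y ∈ s) : dist x y ≤ δ := by
  by_contra hlt
  push_neg at hlt
  have hne : x ≠ y := by
    rintro rfl
    rw [dist_self] at hlt
    linarith
  have hsub : ({x, y} : Set X) ⊆ s := by
    intro u hu
    rcases hu with rfl | rfl
    · exact hx
    · exact hy
  have hsep : IsSeparated' δ ({x, y} : Set X) := by
    rintro u (rfl | rfl) v (rfl | rfl) huv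
    · exact absurd rfl huv
    · exact hlt
    · rwa [dist_comm]
    · exact absurd rfl huv
  have h2 : (2 : ℕ∞) ≤ dCard δ s := by
    have := encard_le_dCard hsub hsep
    rwa [Set.encard_pair hne] at this
  have : (2 : ℕ∞) ≤ 1 := h2.trans h
  norm_num at this

lemma dCard_le_card_of_cover {δ : ℝ} {ι : Type*} [Nonempty ι] (f : X ≃ₜ X) (I : Finset ι)
    (C : ι → Set X) (hC : ∀ i ∈ I, DynClique f δ (C i)) {B : Set X}
    (hB : B ⊆ ⋃ i ∈ I, C i) (k : ℤ) :
    dCard δ (hiter f k '' B) ≤ (I.card : ℕ∞) := by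
  classical
  apply dCard_le
  intro S hS hsep
  set g : X → ι := fun s =>
    if h : ∃ i, i ∈ I ∧ s ∈ hiter f k '' (C i) then h.choose else Classical.arbitrary ι with hg
  have hgspec : ∀ s ∈ S, g s ∈ I ∧ s ∈ hiter f k '' (C (g s)) := by
    intro s hs
    obtain ⟨x, hxB, rfl⟩ := hS hs
    have hx' := hB hxB
    simp only [Set.mem_iUnion] at hx'
    obtain ⟨i, hi, hxC⟩ := hx'
    have hex : ∃ i, i ∈ I ∧ hiter f k x ∈ hiter f k '' (C i) := ⟨i, hi, ⟨x, hxC, rfl⟩⟩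
    rw [hg]
    simp only [hex, dif_pos]
    exact hex.choose_spec
  have hinj : Set.InjOn g S := by
    intro s hs t ht heq
    by_contra hne
    obtain ⟨hI, x, hxC, hxe⟩ := hgspec s hs
    obtain ⟨hI', y, hyC, hye⟩ := hgspec t ht
    rw [heq] at hxC
    have := hC _ hI' x hxC y hyC 0
    rw [hiter_zero, hiter_zero] at this
    have hd : dist s t ≤ δ := by
      rw [← hxe, ← hye]
      have := hC _ hI' x hxC y hyC k
      exact this
    exact absurd hd (not_le.mpr (hsep s hs t ht hne))
  calc S.encard = (g '' S).encard := (hinj.encard_image).symm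
    _ ≤ (↑I : Set ι).encard := Set.encard_mono (by rintro _ ⟨s, hs, rfl⟩; exact (hgspec s hs).1)
    _ = I.card := Set.encard_coe_eq_coe_finsetCard I

lemma card_hits_le (F : X → X) (y w : X) (q L : ℕ) (hq0 : 0 < q)
    (hw : minimalPeriod F w = 0 ∨ q ≤ minimalPeriod F w)
    [DecidablePred fun j => F^[j] y = w] :
    ((Finset.range L).filter (fun j => F^[j] y = w)).card ≤ L / q + 1 := by
  set S := (Finset.range L).filter (fun j => F^[j] y = w) with hSdef
  by_cases h1 : S.card ≤ 1
  · exact h1.trans (Nat.le_add_left 1 _)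
  push_neg at h1
  have key : ∀ i₁ ∈ S, ∀ i₂ ∈ S, i₁ < i₂ → IsPeriodicPt F (i₂ - i₁) w := by
    intro i₁ h₁ i₂ h₂ hlt
    have e₁ : F^[i₁] y = w := (Finset.mem_filter.mp h₁).2
    have e₂ : F^[i₂] y = w := (Finset.mem_filter.mp h₂).2
    show F^[i₂ - i₁] w = w
    conv_lhs => rw [← e₁]
    rw [← Function.iterate_add_apply, Nat.sub_add_cancel hlt.le]
    exact e₂
  obtain ⟨j₁, hj₁, j₂, hj₂, hne⟩ := Finset.one_lt_card.mp h1
  have hper : 0 < minimalPeriod F w := by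
    rcases lt_or_gt_of_ne hne with h | h
    · exact IsPeriodicPt.minimalPeriod_pos (by omega) (key _ hj₁ _ hj₂ h)
    · exact IsPeriodicPt.minimalPeriod_pos (by omega) (key _ hj₂ _ hj₁ h)
  have hq : q ≤ minimalPeriod F w := hw.resolve_left (by omega)
  have hmono : ∀ i₁ ∈ S, ∀ i₂ ∈ S, i₁ < i₂ →
      i₁ / minimalPeriod F w < i₂ / minimalPeriod F w := by
    intro i₁ h₁ i₂ h₂ hlt
    obtain ⟨c, hc⟩ := (key _ h₁ _ h₂ hlt).minimalPeriod_dvd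
    have hc1 : 1 ≤ c := by
      rcases Nat.eq_zero_or_pos c with rfl | h
      · rw [mul_zero] at hc; omega
      · exact h
    have hi2 : i₂ = i₁ + minimalPeriod F w * c := by omega
    rw [hi2, Nat.add_mul_div_left _ _ hper]
    omega
  have hinj : Set.InjOn (· / minimalPeriod F w) ↑S := by
    intro i₁ h₁ i₂ h₂ heq
    by_contra hne'
    rcases lt_or_gt_of_ne hne' with h | h
    · exact absurd heq (Nat.ne_of_lt (hmono _ h₁ _ h₂ h))
    · exact absurd heq.symm (Nat.ne_of_lt (hmono _ h₂ _ h₁ h))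
  have hmap : ∀ j ∈ S, j / minimalPeriod F w ∈ Finset.range (L / q + 1) := by
    intro j hj
    have hjL : j < L := Finset.mem_range.mp (Finset.mem_filter.mp hj).1
    have h2 : j / minimalPeriod F w ≤ L / minimalPeriod F w := Nat.div_le_div_right hjL.le
    have h3 : L / minimalPeriod F w ≤ L / q := Nat.div_le_div_left hq hq0
    rw [Finset.mem_range]
    omega
  calc S.card ≤ (Finset.range (L / q + 1)).card :=
        Finset.card_le_card_of_injOn _ hmap hinj
    _ = L / q + 1 := by simp

lemma exists_disjoint_translates (f : X ≃ₜ X) (a n : ℕ) (ha : 2 ≤ a) (hn : 2 ≤ n)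
    (A : Set X) (hA : A.encard = (a : ℕ∞))
    (hper : ∀ g : ℕ, ∀ w ∈ (⇑f)^[g] '' A,
      minimalPeriod ⇑f w = 0 ∨ 2 * n * a ^ 2 + 1 ≤ minimalPeriod ⇑f w) :
    ∃ G : Finset ℕ, G.card = n ∧ ∀ g ∈ G, ∀ g' ∈ G, g ≠ g' →
      ((⇑f)^[g] '' A) ∩ ((⇑f)^[g'] '' A) = ∅ := by
  classical
  set q := 2 * n * a ^ 2 + 1 with hqdef
  set L := n * a ^ 2 * q with hLdef
  have hq0 : 0 < q := by omega
  have hLq : L / q = n * a ^ 2 := Nat.mul_div_cancel _ hq0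
  have hAfin : A.Finite := by
    rw [← Set.encard_ne_top_iff, hA]
    exact WithTop.coe_ne_top
  set Afin := hAfin.toFinset with hAfindef
  have hAcard : Afin.card = a := by
    have := hAfin.encard_eq_coe_toFinset_card
    rw [hA] at this
    exact_mod_cast this.symm
  have hAne : A.Nonempty := by
    rw [← Set.encard_pos, hA]
    exact_mod_cast (by omega : 0 < a)
  set Fcal : ℕ → Finset ℕ := fun g =>
    (Finset.range L).filter (fun j => (((⇑f)^[j] '' A) ∩ ((⇑f)^[g] '' A)).Nonempty)
    with hFdef
  have hFcard : ∀ g, (Fcal g).card ≤ a ^ 2 * (n * a ^ 2 + 1) := by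
    intro g
    have hsub : Fcal g ⊆ Afin.biUnion (fun y => Afin.biUnion (fun z =>
        (Finset.range L).filter (fun j => (⇑f)^[j] y = (⇑f)^[g] z))) := by
      intro j hj
      rw [hFdef, Finset.mem_filter] at hj
      obtain ⟨hjL, pt, ⟨⟨y, hy, hye⟩, ⟨z, hz, hze⟩⟩⟩ := hj
      rw [Finset.mem_biUnion]
      refine ⟨y, hAfin.mem_toFinset.mpr hy, ?_⟩
      rw [Finset.mem_biUnion]
      refine ⟨z, hAfin.mem_toFinset.mpr hz, ?_⟩
      rw [Finset.mem_filter]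
      exact ⟨hjL, by rw [hye, hze]⟩
    calc (Fcal g).card ≤ _ := Finset.card_le_card hsub
      _ ≤ ∑ y ∈ Afin, (Afin.biUnion (fun z =>
          (Finset.range L).filter (fun j => (⇑f)^[j] y = (⇑f)^[g] z))).card :=
        Finset.card_biUnion_le
      _ ≤ ∑ y ∈ Afin, ∑ z ∈ Afin,
          ((Finset.range L).filter (fun j => (⇑f)^[j] y = (⇑f)^[g] z)).card :=
        Finset.sum_le_sum fun y _ => Finset.card_biUnion_le
      _ ≤ ∑ y ∈ Afin, ∑ z ∈ Afin, (L / q + 1) := by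
        refine Finset.sum_le_sum fun y _ => Finset.sum_le_sum fun z hz => ?_
        refine card_hits_le (⇑f) y ((⇑f)^[g] z) q L hq0 ?_
        exact hper g _ ⟨z, hAfin.mem_toFinset.mp hz, rfl⟩
      _ = a ^ 2 * (n * a ^ 2 + 1) := by
        rw [Finset.sum_const, Finset.sum_const, hAcard, smul_eq_mul, smul_eq_mul, hLq]
        ring
  have hstep : ∀ t, t ≤ n → ∃ G : Finset ℕ, G.card = t ∧ ∀ g ∈ G, ∀ g' ∈ G, g ≠ g' →
      ((⇑f)^[g] '' A) ∩ ((⇑f)^[g'] '' A) = ∅ := by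
    intro t
    induction t with
    | zero => exact fun _ => ⟨∅, rfl, by simp⟩
    | succ t ih =>
      intro ht
      obtain ⟨G, hGcard, hGdisj⟩ := ih (by omega)
      set forb := G.biUnion Fcal with hforbdef
      have hforb : forb.card < L := by
        have h1 : forb.card ≤ ∑ g ∈ G, (Fcal g).card := Finset.card_biUnion_le
        have h2 : ∑ g ∈ G, (Fcal g).card ≤ t * (a ^ 2 * (n * a ^ 2 + 1)) := by
          calc ∑ g ∈ G, (Fcal g).card ≤ ∑ _g ∈ G, (a ^ 2 * (n * a ^ 2 + 1)) :=
              Finset.sum_le_sum fun g _ => hFcard g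
            _ = t * (a ^ 2 * (n * a ^ 2 + 1)) := by
              rw [Finset.sum_const, hGcard, smul_eq_mul]
        have h3 : t * (a ^ 2 * (n * a ^ 2 + 1)) < L := by
          have htn : t ≤ n := by omega
          have hmul : t * (a ^ 2 * (n * a ^ 2 + 1)) ≤ n * (a ^ 2 * (n * a ^ 2 + 1)) :=
            Nat.mul_le_mul_right _ htn
          have hL : L = n * a ^ 2 * (2 * n * a ^ 2 + 1) := by rw [hLdef, hqdef]
          have hu : 0 < n * a ^ 2 := by positivity
          have key : n * (a ^ 2 * (n * a ^ 2 + 1)) < L := by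
            rw [hL]
            nlinarith [hu, mul_pos hu hu]
          exact lt_of_le_of_lt hmul key
        omega
      obtain ⟨j, hjL, hjforb⟩ : ∃ j ∈ Finset.range L, j ∉ forb := by
        by_contra hcc
        push_neg at hcc
        have : (Finset.range L).card ≤ forb.card := Finset.card_le_card hcc
        rw [Finset.card_range] at this
        omega
      have hjA : ∀ g ∈ G, (((⇑f)^[j] '' A) ∩ ((⇑f)^[g] '' A)) = ∅ := by
        intro g hg
        by_contra hne
        have hj' : j ∈ Fcal g := by
          rw [hFdef, Finset.mem_filter]
          exact ⟨hjL, Set.nonempty_iff_ne_empty.mpr hne⟩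
        exact hjforb (Finset.mem_biUnion.mpr ⟨g, hg, hj'⟩)
      have hjG : j ∉ G := by
        intro hjG
        apply hjforb
        refine Finset.mem_biUnion.mpr ⟨j, hjG, ?_⟩
        rw [hFdef, Finset.mem_filter]
        refine ⟨hjL, ?_⟩
        rw [Set.inter_self]
        exact hAne.image _
      refine ⟨insert j G, by rw [Finset.card_insert_of_notMem hjG, hGcard], ?_⟩
      intro g hg g' hg' hne
      rcases Finset.mem_insert.mp hg with hgj | hgG
      · rcases Finset.mem_insert.mp hg' with hg'j | hg'G
        · exact absurd (hgj.trans hg'j.symm) hne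
        · rw [hgj]; exact hjA g' hg'G
      · rcases Finset.mem_insert.mp hg' with hg'j | hg'G
        · rw [hg'j, Set.inter_comm]; exact hjA g hgG
        · exact hGdisj g hgG g' hg'G hne
  exact hstep n le_rfl

lemma per_scale (f : X ≃ₜ X) (a n : ℕ) (ha : 2 ≤ a) (hn : 2 ≤ n) {δ ε : ℝ}
    (hδ : 0 < δ) (hε : 0 < ε) (hεδ : ε ≤ δ)
    (A : Set X) (hA : A.encard = (a : ℕ∞)) (hclq : DynClique f ε A) :
    (∃ B : Set X, B.encard = ((a * n : ℕ) : ℕ∞) ∧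
      ∀ k : ℤ, dCard δ (hiter f k '' B) ≤ (n : ℕ∞)) ∨
    (∃ w P, (⇑f)^[(2 * n * a ^ 2).factorial] w = w ∧ w ∈ P ∧ P.encard = (a : ℕ∞) ∧
      DynClique f ε P) := by
  classical
  by_cases hw : ∃ g : ℕ, ∃ w ∈ (⇑f)^[g] '' A,
      0 < minimalPeriod ⇑f w ∧ minimalPeriod ⇑f w ≤ 2 * n * a ^ 2
  · right
    obtain ⟨g, w, hwmem, hpos, hle⟩ := hw
    refine ⟨w, (⇑f)^[g] '' A, ?_, hwmem, ?_, ?_⟩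
    · obtain ⟨c, hc⟩ := Nat.dvd_factorial hpos hle
      have hpp := (isPeriodicPt_minimalPeriod ⇑f w).mul_const c
      rw [← hc] at hpp
      exact hpp
    · rw [← hiter_natCast]
      rw [((hiter_injective f _).injOn).encard_image]
      exact hA
    · rw [← hiter_natCast]
      exact hclq.image _
  · left
    push_neg at hw
    have hper : ∀ g : ℕ, ∀ w ∈ (⇑f)^[g] '' A,
        minimalPeriod ⇑f w = 0 ∨ 2 * n * a ^ 2 + 1 ≤ minimalPeriod ⇑f w := by
      intro g w hwm
      have := hw g w hwm
      omega
    obtain ⟨G, hGcard, hGdisj⟩ := exists_disjoint_translates f a n ha hn A hA hper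
    have hAfin : A.Finite := by
      rw [← Set.encard_ne_top_iff, hA]
      exact WithTop.coe_ne_top
    set Afin := hAfin.toFinset with hAfindef
    have hAcard : Afin.card = a := by
      have := hAfin.encard_eq_coe_toFinset_card
      rw [hA] at this
      exact_mod_cast this.symm
    have hfinj : ∀ g : ℕ, Function.Injective ((⇑f)^[g]) :=
      fun g => Function.Injective.iterate f.injective g
    set Bfin : Finset X := G.biUnion (fun g => Afin.image ((⇑f)^[g])) with hBdef
    have hcoe : ∀ g : ℕ, (↑(Afin.image ((⇑f)^[g])) : Set X) = (⇑f)^[g] '' A := by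
      intro g
      rw [Finset.coe_image, hAfin.coe_toFinset]
    refine ⟨↑Bfin, ?_, ?_⟩
    · rw [Set.encard_coe_eq_coe_finsetCard]
      have hcard : Bfin.card = a * n := by
        rw [hBdef, Finset.card_biUnion]
        · calc ∑ g ∈ G, (Afin.image ((⇑f)^[g])).card
              = ∑ _g ∈ G, a := Finset.sum_congr rfl fun g _ => by
                rw [Finset.card_image_of_injective _ (hfinj g), hAcard]
            _ = n * a := by rw [Finset.sum_const, hGcard, smul_eq_mul]
            _ = a * n := mul_comm _ _
        · intro g hg g' hg' hne
          rw [Function.onFun, Finset.disjoint_left]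
          intro x hx hx'
          have h1 : x ∈ (⇑f)^[g] '' A := by rw [← hcoe g]; exact_mod_cast hx
          have h2 : x ∈ (⇑f)^[g'] '' A := by rw [← hcoe g']; exact_mod_cast hx'
          have := hGdisj g hg g' hg' hne
          have : x ∈ (((⇑f)^[g] '' A) ∩ ((⇑f)^[g'] '' A)) := ⟨h1, h2⟩
          rw [hGdisj g hg g' hg' hne] at this
          exact this
      rw [hcard]
    · intro k
      have hcov : (↑Bfin : Set X) ⊆ ⋃ g ∈ G, hiter f (g : ℤ) '' A := by
        intro x hx
        rw [hBdef] at hx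
        rw [Finset.coe_biUnion] at hx
        simp only [Set.mem_iUnion] at hx
        obtain ⟨g, hg, hx⟩ := hx
        rw [Set.mem_iUnion₂]
        refine ⟨g, hg, ?_⟩
        rw [hiter_natCast]
        rw [← hcoe g]
        exact hx
      have := dCard_le_card_of_cover f G (fun g => hiter f (g : ℤ) '' A)
        (fun g _ => (hclq.mono hεδ).image _) hcov k
      rwa [hGcard] at this

lemma hiter_eq_of_periodic (f : X ≃ₜ X) {Q : ℕ} (hQ : 0 < Q) {x : X}
    (hx : (⇑f)^[Q] x = x) (k : ℤ) :
    hiter f k x = (⇑f)^[(k % (Q : ℤ)).toNat] x := by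
  have hQfix : (f.toEquiv ^ (Q : ℤ)) x = x := by
    rw [zpow_natCast]
    have : ⇑(f.toEquiv ^ Q) = (⇑f)^[Q] := by
      rw [Equiv.Perm.coe_pow, Homeomorph.coe_toEquiv]
    rw [show (f.toEquiv ^ Q) x = ((⇑(f.toEquiv ^ Q)) x) from rfl, this]
    exact hx
  have hj : hiter f ((Q : ℤ) * (k / (Q : ℤ))) x = x := by
    unfold hiter
    rw [zpow_mul]
    exact Equiv.Perm.zpow_apply_eq_self_of_apply_eq_self hQfix _
  have hsplit : k = k % (Q : ℤ) + (Q : ℤ) * (k / (Q : ℤ)) := (Int.emod_add_mul_ediv k (Q : ℤ)).symm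
  calc hiter f k x = hiter f (k % (Q : ℤ) + (Q : ℤ) * (k / (Q : ℤ))) x := by rw [← hsplit]
    _ = hiter f (k % (Q : ℤ)) (hiter f ((Q : ℤ) * (k / (Q : ℤ))) x) := hiter_add ..
    _ = hiter f (k % (Q : ℤ)) x := by rw [hj]
    _ = (⇑f)^[(k % (Q : ℤ)).toNat] x := by
        rw [← hiter_natCast, Int.toNat_of_nonneg
          (Int.emod_nonneg k (by exact_mod_cast hQ.ne' : (Q : ℤ) ≠ 0))]

lemma dyn_dist_of_periodic (f : X ≃ₜ X) {Q : ℕ} (hQ : 0 < Q) {x y : X} {c : ℝ}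
    (hx : (⇑f)^[Q] x = x) (hy : (⇑f)^[Q] y = y)
    (h : ∀ j < Q, dist ((⇑f)^[j] x) ((⇑f)^[j] y) ≤ c) (k : ℤ) :
    dist (hiter f k x) (hiter f k y) ≤ c := by
  rw [hiter_eq_of_periodic f hQ hx k, hiter_eq_of_periodic f hQ hy k]
  apply h
  have h1 : 0 ≤ k % (Q : ℤ) := Int.emod_nonneg k (by exact_mod_cast hQ.ne')
  have h2 : k % (Q : ℤ) < (Q : ℤ) := Int.emod_lt_of_pos k (by exact_mod_cast hQ)
  omega

end Aux

theorem stmt6 [CompactSpace X] (f : X ≃ₜ X) (a n : ℕ) (ha : 2 ≤ a) (hn : 2 ≤ n)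
    (hf : MNExpansive f (a * n) n) : MNExpansive f a 1 := by
  classical
  obtain ⟨δ, hδ, hδf⟩ := hf
  by_contra hcon
  rw [MNExpansive] at hcon
  push_neg at hcon
  have hneg : ∀ ε : ℝ, 0 < ε → ∃ A : Set X, A.encard = (a : ℕ∞) ∧ DynClique f ε A := by
    intro ε hε
    have h1 := hcon ε hε
    rw [MNExpansiveWith] at h1
    push_neg at h1
    obtain ⟨A, hAcard, hAk⟩ := h1
    refine ⟨A, hAcard, ?_⟩
    intro x hx y hy k
    exact dist_le_of_dCard_le_one hε (hAk k) ⟨x, hx, rfl⟩ ⟨y, hy, rfl⟩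
  set Q := (2 * n * a ^ 2).factorial with hQdef
  have hQpos : 0 < Q := Nat.factorial_pos _
  have hstep : ∀ m : ℕ, ∃ w P, (⇑f)^[Q] w = w ∧ w ∈ P ∧ P.encard = (a : ℕ∞) ∧
      DynClique f (min (δ / 4) (1 / (m + 1))) P := by
    intro m
    have hεpos : 0 < min (δ / 4) (1 / ((m : ℝ) + 1)) := lt_min (by linarith) (by positivity)
    obtain ⟨A, hAcard, hclq⟩ := hneg _ hεpos
    rcases per_scale f a n ha hn hδ hεpos
        ((min_le_left _ _).trans (by linarith)) A hAcard hclq with ⟨B, hB, hBk⟩ | h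
    · exfalso
      obtain ⟨k, hk⟩ := hδf B hB
      exact absurd hk (not_lt.mpr (hBk k))
    · exact h
  choose w P hfix hmem hcard hclq using hstep
  obtain ⟨wlim, -, φ, hφ, hlim⟩ :=
    isCompact_univ.tendsto_subseq (x := w) (fun m => Set.mem_univ _)
  have hfixlim : (⇑f)^[Q] wlim = wlim := by
    have h1 : Tendsto ((⇑f)^[Q] ∘ (w ∘ φ)) atTop (𝓝 ((⇑f)^[Q] wlim)) :=
      ((f.continuous.iterate Q).tendsto wlim).comp hlim
    have h2 : (⇑f)^[Q] ∘ (w ∘ φ) = w ∘ φ := funext fun m => hfix (φ m)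
    rw [h2] at h1
    exact tendsto_nhds_unique h1 hlim
  have hev : ∀ᶠ m in atTop, ∀ j ∈ Finset.range Q,
      dist ((⇑f)^[j] (w (φ m))) ((⇑f)^[j] wlim) ≤ δ / 4 := by
    rw [Finset.eventually_all]
    intro j _
    have hc : Tendsto (fun m => (⇑f)^[j] ((w ∘ φ) m)) atTop (𝓝 ((⇑f)^[j] wlim)) :=
      ((f.continuous.iterate j).tendsto wlim).comp hlim
    have hd : Tendsto (fun m => dist ((⇑f)^[j] ((w ∘ φ) m)) ((⇑f)^[j] wlim)) atTop
        (𝓝 (dist ((⇑f)^[j] wlim) ((⇑f)^[j] wlim))) := hc.dist tendsto_const_nhds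
    rw [dist_self] at hd
    have := hd.eventually (eventually_le_nhds (by linarith : (0 : ℝ) < δ / 4))
    exact this
  obtain ⟨N, hN⟩ := eventually_atTop.mp hev
  set M : Set ℕ := φ '' Set.Ici N with hMdef
  have hMinf : M.Infinite := (Set.Ici_infinite N).image hφ.injective.injOn
  have hMprop : ∀ m ∈ M, ∀ j < Q, dist ((⇑f)^[j] (w m)) ((⇑f)^[j] wlim) ≤ δ / 4 := by
    rintro m ⟨m', hm', rfl⟩ j hj
    exact hN m' hm' j (Finset.mem_range.mpr hj)
  have hkey : ∀ m ∈ M, ∀ x ∈ P m, ∀ k : ℤ,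
      dist (hiter f k x) (hiter f k wlim) ≤ δ / 4 + δ / 4 := by
    intro m hm x hx k
    calc dist (hiter f k x) (hiter f k wlim)
        ≤ dist (hiter f k x) (hiter f k (w m)) + dist (hiter f k (w m)) (hiter f k wlim) :=
          dist_triangle _ _ _
      _ ≤ δ / 4 + δ / 4 := by
          gcongr
          · exact (hclq m x hx (w m) (hmem m) k).trans (min_le_left _ _)
          · exact dyn_dist_of_periodic f hQpos (hfix m) hfixlim
              (fun j hj => hMprop m hm j hj) k
  set U : Set X := ⋃ m ∈ M, P m with hUdef
  have hUclq : DynClique f δ U := by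
    intro x hx y hy k
    rw [hUdef, Set.mem_iUnion₂] at hx hy
    obtain ⟨m, hm, hx⟩ := hx
    obtain ⟨m', hm', hy⟩ := hy
    calc dist (hiter f k x) (hiter f k y)
        ≤ dist (hiter f k x) (hiter f k wlim) + dist (hiter f k wlim) (hiter f k y) :=
          dist_triangle _ _ _
      _ ≤ (δ / 4 + δ / 4) + (δ / 4 + δ / 4) := by
          gcongr
          · exact hkey m hm x hx k
          · rw [dist_comm]; exact hkey m' hm' y hy k
      _ = δ := by ring
  by_cases hUinf : U.Infinite
  · obtain ⟨B, hBU, hBcard⟩ :=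
      Set.exists_subset_encard_eq (k := ((a * n : ℕ) : ℕ∞)) (by rw [hUinf.encard_eq]; exact le_top)
    obtain ⟨k, hk⟩ := hδf B hBcard
    have h1 := dCard_le_card_of_cover f ({0} : Finset ℕ) (fun _ => U)
      (fun _ _ => hUclq) (B := B) (by intro x hx; simp only [Set.mem_iUnion]; exact ⟨0, by simp, hBU hx⟩) k
    rw [Finset.card_singleton] at h1
    have h2 : (1 : ℕ∞) ≤ (n : ℕ∞) := by exact_mod_cast (by omega : 1 ≤ n)
    exact absurd hk (not_lt.mpr (h1.trans h2))
  · rw [Set.not_infinite] at hUinf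
    have hPM : ∀ m ∈ M, P m ⊆ U := fun m hm => Set.subset_biUnion_of_mem hm
    have himgfin : (P '' M).Finite :=
      hUinf.finite_subsets.subset (by rintro _ ⟨m, hm, rfl⟩; exact hPM m hm)
    have hfiber : ∃ S, {m | m ∈ M ∧ P m = S}.Infinite := by
      by_contra hc
      push_neg at hc
      have hsub : M ⊆ ⋃ S ∈ P '' M, {m | m ∈ M ∧ P m = S} := by
        intro m hm
        rw [Set.mem_iUnion₂]
        exact ⟨P m, ⟨m, hm, rfl⟩, hm, rfl⟩
      exact hMinf ((himgfin.biUnion (fun S _ => hc S)).subset hsub)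
    obtain ⟨S, hSinf⟩ := hfiber
    obtain ⟨m₀, hm₀⟩ := hSinf.nonempty
    have hScard : S.encard = (a : ℕ∞) := by rw [← hm₀.2]; exact hcard m₀
    have h1a : (1 : ℕ∞) < S.encard := by
      rw [hScard]
      exact_mod_cast (by omega : 1 < a)
    obtain ⟨x, y, hxS, hyS, hxy⟩ := Set.one_lt_encard_iff.mp h1a
    have hdist : 0 < dist x y := dist_pos.mpr hxy
    obtain ⟨K, hK⟩ := exists_nat_one_div_lt hdist
    obtain ⟨m, hmM, hmK⟩ := hSinf.exists_gt K
    have hx' : x ∈ P m := by rw [hmM.2]; exact hxS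
    have hy' : y ∈ P m := by rw [hmM.2]; exact hyS
    have hle := hclq m x hx' y hy' 0
    rw [hiter_zero, hiter_zero] at hle
    have h1 : dist x y ≤ 1 / ((m : ℝ) + 1) := hle.trans (min_le_right _ _)
    have h2 : 1 / ((m : ℝ) + 1) ≤ 1 / ((K : ℝ) + 1) := by
      apply one_div_le_one_div_of_le (by positivity)
      have : (K : ℝ) ≤ (m : ℝ) := by exact_mod_cast hmK.le
      linarith
    linarith
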